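/- Let α, α₁, α₂ ∈ ℝ with α ≠ 0 and α·α₂ < 0. For j ∈ ℕ and t ∈ ℝ define c_j(t) = ∫_{−∞}^{∞} s^j e^{jαt} exp((α₁/(2α)) s² e^{2αt} + (α₂/(4α)) s⁴ e^{4αt}) ds. Then each integral converges, each c_j is differentiable on ℝ, and the moments simultaneously satisfy c_j'(t) = α j c_j(t) + α₁ c_{j+2}(t) + α₂ c_{j+4}(t) and c_j'(t) = −α c_j(t) for all j ∈ ℕ and all t ∈ ℝ. -/

import Mathlib

open MeasureTheory

/-- The deformed moments
`c_j(t) = ∫_{−∞}^{∞} s^j e^{jαt} exp((α₁/(2α)) s² e^{2αt} + (α₂/(4α)) s⁴ e^{4αt}) ds`. -/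
noncomputable def deformedMomentLV (α α₁ α₂ : ℝ) (j : ℕ) (t : ℝ) : ℝ :=
  ∫ s : ℝ,
    s ^ j * Real.exp ((j : ℝ) * α * t) *
      Real.exp (α₁ / (2 * α) * s ^ 2 * Real.exp (2 * α * t)
        + α₂ / (4 * α) * s ^ 4 * Real.exp (4 * α * t))

namespace DMLVaux

open Filter Real Set

lemma quartic_bound (b c : ℝ) (hc : c < 0) (s : ℝ) :
    b * s ^ 2 + c * s ^ 4 ≤ (b + 1) ^ 2 / (4 * (-c)) - s ^ 2 := by
  have h4c : (0:ℝ) < 4 * (-c) := by linarith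
  have hK : (b + 1) ^ 2 / (4 * (-c)) * (4 * (-c)) = (b + 1) ^ 2 :=
    div_mul_cancel₀ _ h4c.ne'
  nlinarith [sq_nonneg (2 * c * s ^ 2 + (b + 1)), h4c, hK]

lemma norm_bound (b c : ℝ) (hc : c < 0) (k : ℕ) (s : ℝ) :
    ‖s ^ k * Real.exp (b * s ^ 2 + c * s ^ 4)‖ ≤
      Real.exp ((b + 1) ^ 2 / (4 * (-c)) + (k : ℝ) ^ 2 / 2) * Real.exp (-(1/2) * s ^ 2) := by
  have habs : |s| ≤ Real.exp |s| := by
    linarith [Real.add_one_le_exp |s|]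
  have hpow : |s| ^ k ≤ Real.exp ((k : ℝ) * |s|) := by
    calc |s| ^ k ≤ (Real.exp |s|) ^ k := pow_le_pow_left₀ (abs_nonneg s) habs k
    _ = Real.exp ((k : ℝ) * |s|) := (Real.exp_nat_mul _ k).symm
  have h1 : ‖s ^ k * Real.exp (b * s ^ 2 + c * s ^ 4)‖
      = |s| ^ k * Real.exp (b * s ^ 2 + c * s ^ 4) := by
    rw [norm_mul, Real.norm_eq_abs, Real.norm_eq_abs, abs_pow,
      abs_of_pos (Real.exp_pos _)]
  rw [h1, ← Real.exp_add]
  calc |s| ^ k * Real.exp (b * s ^ 2 + c * s ^ 4)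
      ≤ Real.exp ((k : ℝ) * |s|) * Real.exp ((b + 1) ^ 2 / (4 * (-c)) - s ^ 2) := by
        apply mul_le_mul hpow (Real.exp_le_exp.2 (quartic_bound b c hc s))
          (Real.exp_pos _).le (Real.exp_pos _).le
    _ = Real.exp ((k : ℝ) * |s| + ((b + 1) ^ 2 / (4 * (-c)) - s ^ 2)) := (Real.exp_add _ _).symm
    _ ≤ Real.exp ((b + 1) ^ 2 / (4 * (-c)) + (k : ℝ) ^ 2 / 2 + -(1/2) * s ^ 2) := by
        apply Real.exp_le_exp.2
        nlinarith [sq_nonneg (|s| - (k:ℝ)), sq_abs s]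

lemma integrable_aux (b c : ℝ) (hc : c < 0) (k : ℕ) :
    Integrable (fun s : ℝ => s ^ k * Real.exp (b * s ^ 2 + c * s ^ 4)) := by
  apply Integrable.mono'
    ((integrable_exp_neg_mul_sq (by norm_num : (0:ℝ) < 1/2)).const_mul
      (Real.exp ((b + 1) ^ 2 / (4 * (-c)) + (k : ℝ) ^ 2 / 2)))
  · apply Continuous.aestronglyMeasurable; continuity
  · exact ae_of_all _ fun s => by simpa [neg_mul] using norm_bound b c hc k s

lemma tendsto_exp_neg_sq_atTop :
    Tendsto (fun s : ℝ => Real.exp (-(1/2) * s ^ 2)) atTop (nhds 0) := by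
  apply Real.tendsto_exp_atBot.comp
  have h : Tendsto (fun s : ℝ => s ^ 2) atTop atTop := tendsto_pow_atTop two_ne_zero
  exact h.const_mul_atTop_of_neg (by norm_num : (-(1/2):ℝ) < 0)

lemma tendsto_aux (b c : ℝ) (hc : c < 0) (k : ℕ) :
    Tendsto (fun s : ℝ => s ^ k * Real.exp (b * s ^ 2 + c * s ^ 4)) atTop (nhds 0) := by
  apply squeeze_zero_norm (norm_bound b c hc k)
  simpa using (tendsto_exp_neg_sq_atTop).const_mul
    (Real.exp ((b + 1) ^ 2 / (4 * (-c)) + (k : ℝ) ^ 2 / 2))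

lemma tendsto_aux_bot (b c : ℝ) (hc : c < 0) (k : ℕ) :
    Tendsto (fun s : ℝ => s ^ k * Real.exp (b * s ^ 2 + c * s ^ 4)) atBot (nhds 0) := by
  apply squeeze_zero_norm (norm_bound b c hc k)
  have h2 : Tendsto (fun s : ℝ => Real.exp (-(1/2) * s ^ 2)) atBot (nhds 0) := by
    have := tendsto_exp_neg_sq_atTop.comp tendsto_neg_atBot_atTop
    apply this.congr; intro s; simp [neg_pow]
  simpa using h2.const_mul (Real.exp ((b + 1) ^ 2 / (4 * (-c)) + (k : ℝ) ^ 2 / 2))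

lemma moment_rec (b c : ℝ) (hc : c < 0) (j : ℕ) :
    ((j:ℝ) + 1) * (∫ s : ℝ, s ^ j * Real.exp (b * s ^ 2 + c * s ^ 4))
      + 2 * b * (∫ s : ℝ, s ^ (j + 2) * Real.exp (b * s ^ 2 + c * s ^ 4))
      + 4 * c * (∫ s : ℝ, s ^ (j + 4) * Real.exp (b * s ^ 2 + c * s ^ 4)) = 0 := by
  set F : ℝ → ℝ := fun s => s ^ (j + 1) * Real.exp (b * s ^ 2 + c * s ^ 4) with hF
  set F' : ℝ → ℝ := fun s =>
    ((j:ℝ) + 1) * (s ^ j * Real.exp (b * s ^ 2 + c * s ^ 4))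
      + (2 * b * (s ^ (j + 2) * Real.exp (b * s ^ 2 + c * s ^ 4))
      + 4 * c * (s ^ (j + 4) * Real.exp (b * s ^ 2 + c * s ^ 4))) with hF'
  have hderiv : ∀ s : ℝ, HasDerivAt F (F' s) s := by
    intro s
    have h1 : HasDerivAt (fun s : ℝ => s ^ (j + 1)) (((j:ℝ) + 1) * s ^ j) s := by
      simpa using hasDerivAt_pow (j + 1) s
    have hφ : HasDerivAt (fun s : ℝ => b * s ^ 2 + c * s ^ 4)
        (b * (2 * s) + c * (4 * s ^ 3)) s := by
      have h2 : HasDerivAt (fun s : ℝ => s ^ 2) (2 * s) s := by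
        simpa using hasDerivAt_pow 2 s
      have h4 : HasDerivAt (fun s : ℝ => s ^ 4) (4 * s ^ 3) s := by
        simpa using hasDerivAt_pow 4 s
      exact (h2.const_mul b).add (h4.const_mul c)
    have := h1.fun_mul hφ.exp
    refine this.congr_deriv ?_
    simp only [hF']
    ring
  have hint : ∀ k : ℕ, Integrable (fun s : ℝ => s ^ k * Real.exp (b * s ^ 2 + c * s ^ 4)) :=
    integrable_aux b c hc
  have hF'int : Integrable F' :=
    ((hint j).const_mul _).add (((hint (j+2)).const_mul _).add ((hint (j+4)).const_mul _))
  have hFtop : Tendsto F atTop (nhds 0) := tendsto_aux b c hc (j + 1)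
  have hFbot : Tendsto F atBot (nhds 0) := tendsto_aux_bot b c hc (j + 1)
  have hFcont : Continuous F := by fun_prop
  have hIoi : ∫ s in Ioi (0:ℝ), F' s = 0 - F 0 :=
    integral_Ioi_of_hasDerivAt_of_tendsto hFcont.continuousWithinAt
      (fun x _ => hderiv x) hF'int.integrableOn hFtop
  have hIic : ∫ s in Iic (0:ℝ), F' s = F 0 - 0 :=
    integral_Iic_of_hasDerivAt_of_tendsto hFcont.continuousWithinAt
      (fun x _ => hderiv x) hF'int.integrableOn hFbot
  have htot : ∫ s : ℝ, F' s = 0 := by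
    rw [← intervalIntegral.integral_Iic_add_Ioi hF'int.integrableOn hF'int.integrableOn,
      hIoi, hIic]
    ring
  have i1 : Integrable (fun s : ℝ => ((j:ℝ) + 1) * (s ^ j * Real.exp (b * s ^ 2 + c * s ^ 4))) :=
    (hint j).const_mul _
  have i2 : Integrable (fun s : ℝ => 2 * b * (s ^ (j+2) * Real.exp (b * s ^ 2 + c * s ^ 4))) :=
    (hint (j+2)).const_mul _
  have i3 : Integrable (fun s : ℝ => 4 * c * (s ^ (j+4) * Real.exp (b * s ^ 2 + c * s ^ 4))) :=
    (hint (j+4)).const_mul _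
  have i23 : Integrable (fun s : ℝ => 2 * b * (s ^ (j+2) * Real.exp (b * s ^ 2 + c * s ^ 4))
      + 4 * c * (s ^ (j+4) * Real.exp (b * s ^ 2 + c * s ^ 4))) := i2.add i3
  rw [hF'] at htot
  rw [integral_add i1 i23, integral_add i2 i3,
      integral_const_mul, integral_const_mul, integral_const_mul] at htot
  linarith

lemma integrand_eq (α α₁ α₂ : ℝ) (j : ℕ) (t : ℝ) (s : ℝ) :
    s ^ j * Real.exp ((j : ℝ) * α * t) *
      Real.exp (α₁ / (2 * α) * s ^ 2 * Real.exp (2 * α * t)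
        + α₂ / (4 * α) * s ^ 4 * Real.exp (4 * α * t))
    = (fun u : ℝ => u ^ j * Real.exp (α₁ / (2 * α) * u ^ 2 + α₂ / (4 * α) * u ^ 4))
        (Real.exp (α * t) * s) := by
  have hj : Real.exp ((j : ℝ) * α * t) = Real.exp (α * t) ^ j := by
    rw [← Real.exp_nat_mul]; congr 1; ring
  have h2 : Real.exp (2 * α * t) = Real.exp (α * t) ^ 2 := by
    rw [sq, ← Real.exp_add]; congr 1; ring
  have h4 : Real.exp (4 * α * t) = Real.exp (α * t) ^ 4 := by
    rw [← Real.exp_nat_mul]; congr 1; push_cast; ring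
  simp only [hj, h2, h4, mul_pow]
  ring_nf

lemma subst (α α₁ α₂ : ℝ) (j : ℕ) (t : ℝ) :
    deformedMomentLV α α₁ α₂ j t = Real.exp (-(α * t)) *
      ∫ s : ℝ, s ^ j * Real.exp (α₁ / (2 * α) * s ^ 2 + α₂ / (4 * α) * s ^ 4) := by
  unfold deformedMomentLV
  rw [show (fun s : ℝ => s ^ j * Real.exp ((j : ℝ) * α * t) *
      Real.exp (α₁ / (2 * α) * s ^ 2 * Real.exp (2 * α * t)
        + α₂ / (4 * α) * s ^ 4 * Real.exp (4 * α * t)))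
    = fun s : ℝ => (fun u : ℝ => u ^ j * Real.exp (α₁ / (2 * α) * u ^ 2 + α₂ / (4 * α) * u ^ 4))
        (Real.exp (α * t) * s) from funext (integrand_eq α α₁ α₂ j t)]
  rw [MeasureTheory.Measure.integral_comp_mul_left
      (fun u : ℝ => u ^ j * Real.exp (α₁ / (2 * α) * u ^ 2 + α₂ / (4 * α) * u ^ 4))
      (Real.exp (α * t))]
  rw [abs_of_pos (inv_pos.2 (Real.exp_pos _)), ← Real.exp_neg, smul_eq_mul]

end DMLVaux

/-- The moments simultaneously satisfy the nonisospectral evolution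
`c_j' = α j c_j + α₁ c_{j+2} + α₂ c_{j+4}` and the stationarity relation `c_j' = −α c_j`. -/
theorem deformedMomentLV_evolution (α α₁ α₂ : ℝ) (hα : α ≠ 0) (hαα₂ : α * α₂ < 0) :
    (∀ (j : ℕ) (t : ℝ), Integrable
      (fun s : ℝ => s ^ j * Real.exp ((j : ℝ) * α * t) *
        Real.exp (α₁ / (2 * α) * s ^ 2 * Real.exp (2 * α * t)
          + α₂ / (4 * α) * s ^ 4 * Real.exp (4 * α * t)))) ∧
    (∀ (j : ℕ) (t : ℝ), HasDerivAt (fun u => deformedMomentLV α α₁ α₂ j u)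
      (α * (j : ℝ) * deformedMomentLV α α₁ α₂ j t
        + α₁ * deformedMomentLV α α₁ α₂ (j + 2) t
        + α₂ * deformedMomentLV α α₁ α₂ (j + 4) t) t) ∧
    (∀ (j : ℕ) (t : ℝ), HasDerivAt (fun u => deformedMomentLV α α₁ α₂ j u)
      (-α * deformedMomentLV α α₁ α₂ j t) t) := by
  set b : ℝ := α₁ / (2 * α) with hb
  set c : ℝ := α₂ / (4 * α) with hcdef
  have hc : c < 0 := by
    rw [hcdef, div_neg_iff]
    rcases lt_or_gt_of_ne hα with h | h
    · left; constructor <;> nlinarith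
    · right; constructor <;> nlinarith
  set M : ℕ → ℝ := fun k => ∫ s : ℝ, s ^ k * Real.exp (b * s ^ 2 + c * s ^ 4) with hM
  have hsub : ∀ (j : ℕ) (t : ℝ), deformedMomentLV α α₁ α₂ j t = Real.exp (-(α * t)) * M j :=
    fun j t => DMLVaux.subst α α₁ α₂ j t
  -- the basic exponential derivative
  have hD : ∀ (j : ℕ) (t : ℝ), HasDerivAt (fun u => deformedMomentLV α α₁ α₂ j u)
      (-α * (Real.exp (-(α * t)) * M j)) t := by
    intro j t
    have h0 : HasDerivAt (fun u : ℝ => -(α * u)) (-α) t := by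
      simpa using ((hasDerivAt_id t).const_mul α).fun_neg
    have h1 : HasDerivAt (fun u : ℝ => Real.exp (-(α * u)) * M j)
        (Real.exp (-(α * t)) * (-α) * M j) t := (h0.exp).mul_const (M j)
    have heq : (fun u => deformedMomentLV α α₁ α₂ j u)
        = fun u : ℝ => Real.exp (-(α * u)) * M j := funext fun u => hsub j u
    rw [heq]
    convert h1 using 1
    ring
  have hrec : ∀ j : ℕ, α * ((j:ℝ) + 1) * M j + α₁ * M (j + 2) + α₂ * M (j + 4) = 0 := by
    intro j
    have h : ((j:ℝ) + 1) * M j + 2 * b * M (j + 2) + 4 * c * M (j + 4) = 0 :=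
      DMLVaux.moment_rec b c hc j
    have h2b : α * (2 * b) = α₁ := by rw [hb]; field_simp
    have h4c : α * (4 * c) = α₂ := by rw [hcdef]; field_simp
    linear_combination α * h + (- M (j + 2)) * h2b + (- M (j + 4)) * h4c
  refine ⟨?_, ?_, ?_⟩
  · intro j t
    rw [show (fun s : ℝ => s ^ j * Real.exp ((j : ℝ) * α * t) *
        Real.exp (α₁ / (2 * α) * s ^ 2 * Real.exp (2 * α * t)
          + α₂ / (4 * α) * s ^ 4 * Real.exp (4 * α * t)))
      = fun s : ℝ => (fun u : ℝ => u ^ j * Real.exp (b * u ^ 2 + c * u ^ 4))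
          (Real.exp (α * t) * s) from funext (DMLVaux.integrand_eq α α₁ α₂ j t)]
    exact (DMLVaux.integrable_aux b c hc j).comp_mul_left' (Real.exp_ne_zero _)
  · intro j t
    have key : α * (j : ℝ) * deformedMomentLV α α₁ α₂ j t
        + α₁ * deformedMomentLV α α₁ α₂ (j + 2) t
        + α₂ * deformedMomentLV α α₁ α₂ (j + 4) t
        = -α * (Real.exp (-(α * t)) * M j) := by
      rw [hsub j, hsub (j + 2), hsub (j + 4)]
      linear_combination Real.exp (-(α * t)) * hrec j
    rw [key]
    exact hD j t
  · intro j t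
    rw [show -α * deformedMomentLV α α₁ α₂ j t = -α * (Real.exp (-(α * t)) * M j) by
      rw [hsub j]]
    exact hD j t
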